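/- On a tree T with finite nonempty vertex set V_i, every vertex u that is not a Jordan center of V_i (i.e., d̄(u, V_i) > min_w d̄(w, V_i)) has a neighbor v with d̄(v, V_i) = d̄(u, V_i) - 1. -/

import Mathlib

open SimpleGraph

section Aux

variable {V : Type*} {T : SimpleGraph V}

/-- Every vertex is connected, avoiding the edge `s(u,v)`, to `u` or to `v`. -/
private lemma side_classification (hc : T.Connected) {u v : V}
    (x : V) :
    (∃ p : T.Walk u x, s(u, v) ∉ p.edges) ∨ (∃ p : T.Walk v x, s(u, v) ∉ p.edges) := by
  obtain ⟨q⟩ := hc.preconnected u x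
  have key : ∀ {a b : V} (p : T.Walk a b),
      ((∃ p : T.Walk u a, s(u, v) ∉ p.edges) ∨ (∃ p : T.Walk v a, s(u, v) ∉ p.edges)) →
      ((∃ p : T.Walk u b, s(u, v) ∉ p.edges) ∨ (∃ p : T.Walk v b, s(u, v) ∉ p.edges)) := by
    intro a b p
    induction p with
    | nil => exact id
    | @cons a c b hab q ih =>
      intro ha
      apply ih
      by_cases he : s(a, c) = s(u, v)
      · rw [Sym2.eq_iff] at he
        rcases he with ⟨rfl, rfl⟩ | ⟨rfl, rfl⟩
        · right; exact ⟨Walk.nil, by simp⟩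
        · left; exact ⟨Walk.nil, by simp⟩
      · rcases ha with ⟨p, hp⟩ | ⟨p, hp⟩
        · left
          refine ⟨p.concat hab, ?_⟩
          simp only [Walk.edges_concat, List.concat_eq_append, List.mem_append,
            List.mem_singleton]
          rintro (h | h)
          · exact hp h
          · exact he h.symm
        · right
          refine ⟨p.concat hab, ?_⟩
          simp only [Walk.edges_concat, List.concat_eq_append, List.mem_append,
            List.mem_singleton]
          rintro (h | h)
          · exact hp h
          · exact he h.symm
  exact key q (Or.inl ⟨Walk.nil, by simp⟩)

/-- If `x` is on the `u`-side of the bridge `s(u,v)`, then `dist v x = dist u x + 1`. -/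
private lemma dist_side (hc : T.Connected) {u v : V} (huv : T.Adj u v)
    (hb : ∀ p : T.Walk u v, s(u, v) ∈ p.edges) {x : V}
    (hx : ∃ p : T.Walk u x, s(u, v) ∉ p.edges) :
    T.dist v x = T.dist u x + 1 := by
  classical
  obtain ⟨p, hp⟩ := hx
  have hne : v ≠ x := by
    rintro rfl
    exact hp (hb p)
  -- upper bound
  have hle : T.dist v x ≤ T.dist u x + 1 := by
    calc T.dist v x ≤ T.dist v u + T.dist u x := hc.dist_triangle
    _ ≤ 1 + T.dist u x := by
        have : T.dist v u ≤ 1 := by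
          rw [SimpleGraph.dist_comm]
          exact (SimpleGraph.dist_eq_one_iff_adj.mpr huv).le
        omega
    _ = T.dist u x + 1 := by omega
  -- lower bound
  obtain ⟨q, hq⟩ := (hc.preconnected v x).exists_walk_length_eq_dist
  have hmem : s(u, v) ∈ q.edges := by
    by_contra hnot
    -- then q.reverse.append p.reverse... gives a walk u → v avoiding the edge
    have : s(u, v) ∈ (p.append q.reverse).edges := hb _
    rw [Walk.edges_append, List.mem_append, Walk.edges_reverse, List.mem_reverse] at this
    rcases this with h | h
    · exact hp h
    · exact hnot h
  have husup : u ∈ q.support := q.fst_mem_support_of_mem_edges hmem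
  have hsplit : (q.takeUntil u husup).length + (q.dropUntil u husup).length = q.length := by
    have := congrArg Walk.length (q.take_spec husup)
    rwa [Walk.length_append] at this
  have h1 : 1 ≤ (q.takeUntil u husup).length := by
    by_contra h
    have h0 : (q.takeUntil u husup).length = 0 := by omega
    have := Walk.eq_of_length_eq_zero h0
    exact huv.ne this.symm
  have h2 : T.dist u x ≤ (q.dropUntil u husup).length := SimpleGraph.dist_le _
  have := hq ▸ hsplit
  omega

/-- walk-avoidance transfers across the bridge: if `w` is on the `v`-side and `x` on the
`u`-side, every walk from `w` to `x` passes through `v`. -/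
private lemma dist_cross (hc : T.Connected) {u v : V} (huv : T.Adj u v)
    (hb : ∀ p : T.Walk u v, s(u, v) ∈ p.edges) {w x : V}
    (hw : ∃ p : T.Walk v w, s(u, v) ∉ p.edges)
    (hx : ∃ p : T.Walk u x, s(u, v) ∉ p.edges) :
    T.dist v x ≤ T.dist w x := by
  classical
  obtain ⟨pw, hpw⟩ := hw
  obtain ⟨px, hpx⟩ := hx
  obtain ⟨q, hq⟩ := (hc.preconnected w x).exists_walk_length_eq_dist
  have hmem : s(u, v) ∈ q.edges := by
    by_contra hnot
    -- walk u → v avoiding the edge: px.append q.reverse.append pw.reverse... : u → x → w → v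
    have : s(u, v) ∈ ((px.append q.reverse).append pw.reverse).edges := hb _
    simp only [Walk.edges_append, List.mem_append, Walk.edges_reverse, List.mem_reverse] at this
    rcases this with (h | h) | h
    · exact hpx h
    · exact hnot h
    · exact hpw h
  have hvsup : v ∈ q.support := q.snd_mem_support_of_mem_edges hmem
  have hsplit : (q.takeUntil v hvsup).length + (q.dropUntil v hvsup).length = q.length := by
    have := congrArg Walk.length (q.take_spec hvsup)
    rwa [Walk.length_append] at this
  have h2 : T.dist v x ≤ (q.dropUntil v hvsup).length := SimpleGraph.dist_le _
  have := hq ▸ hsplit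
  omega

end Aux

/-- descent property of the infection range on a tree: every
vertex u that is not a Jordan center of V_i has a neighbor v with
d̄(v, V_i) = d̄(u, V_i) - 1. -/
theorem infection_range_descent {V : Type*} (T : SimpleGraph V)
    (hT : T.IsTree) (Vi : Finset V) (hVi : Vi.Nonempty) (u : V)
    (hu : ∃ w : V, Vi.sup (fun x => T.dist w x) < Vi.sup (fun x => T.dist u x)) :
    ∃ v : V, T.Adj u v ∧
      Vi.sup (fun x => T.dist v x) = Vi.sup (fun x => T.dist u x) - 1 := by
  classical
  obtain ⟨w, hw⟩ := hu
  have hc : T.Connected := hT.isConnected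
  have hne : u ≠ w := by rintro rfl; exact lt_irrefl _ hw
  have hdist0 : T.dist u w ≠ 0 := by
    rw [SimpleGraph.dist_ne_zero_iff_ne_and_reachable]
    exact ⟨hne, hc.preconnected u w⟩
  obtain ⟨p, hp⟩ := (hc.preconnected u w).exists_walk_length_eq_dist
  -- p is non-nil, extract the first step
  cases p with
  | nil => simp at hp; omega
  | @cons _ v _ huv q =>
    refine ⟨v, huv, ?_⟩
    have hqlen : q.length + 1 = T.dist u w := by simpa using hp
    have hvw : T.dist v w + 1 ≤ T.dist u w := by
      have := SimpleGraph.dist_le q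
      omega
    -- bridge property
    have hbridge : T.IsBridge s(u, v) :=
      (SimpleGraph.isAcyclic_iff_forall_adj_isBridge.mp hT.IsAcyclic) huv
    have hb : ∀ p : T.Walk u v, s(u, v) ∈ p.edges :=
      SimpleGraph.isBridge_iff_adj_and_forall_walk_mem_edges.mp hbridge
    -- symmetric version of the bridge (for the edge s(v, u))
    have hb' : ∀ p : T.Walk v u, s(v, u) ∈ p.edges := by
      intro p
      rw [Sym2.eq_swap]
      have := hb p.reverse
      rwa [Walk.edges_reverse, List.mem_reverse] at this
    -- w is on the v-side
    have hwside : ∃ p : T.Walk v w, s(u, v) ∉ p.edges := by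
      rcases side_classification hc (u := u) (v := v) w with h | h
      · exfalso
        have := dist_side hc huv hb h
        omega
      · exact h
    -- eccentricities
    set eu := Vi.sup (fun x => T.dist u x) with heu
    have heu1 : 1 ≤ eu := by omega
    -- lower bound: sup v ≥ eu - 1
    obtain ⟨x0, hx0mem, hx0⟩ := Finset.exists_mem_eq_sup Vi hVi (fun x => T.dist u x)
    have hlow : eu - 1 ≤ Vi.sup (fun x => T.dist v x) := by
      have htri : T.dist u x0 ≤ 1 + T.dist v x0 := by
        calc T.dist u x0 ≤ T.dist u v + T.dist v x0 := hc.dist_triangle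
        _ ≤ 1 + T.dist v x0 := by
            have : T.dist u v ≤ 1 := (SimpleGraph.dist_eq_one_iff_adj.mpr huv).le
            omega
      have hle : T.dist v x0 ≤ Vi.sup (fun x => T.dist v x) :=
        Finset.le_sup (f := fun x => T.dist v x) hx0mem
      have hx0' : eu = T.dist u x0 := hx0
      omega
    -- upper bound
    have hupp : Vi.sup (fun x => T.dist v x) ≤ eu - 1 := by
      apply Finset.sup_le
      intro x hx
      have hux : T.dist u x ≤ eu := Finset.le_sup (f := fun y => T.dist u y) hx
      have hwx : T.dist w x ≤ Vi.sup (fun y => T.dist w y) :=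
        Finset.le_sup (f := fun y => T.dist w y) hx
      rcases side_classification hc (u := u) (v := v) x with h | h
      · -- x on u-side : use crossing through v
        have h1 : T.dist v x = T.dist u x + 1 := dist_side hc huv hb h
        have h2 : T.dist v x ≤ T.dist w x := dist_cross hc huv hb hwside h
        omega
      · -- x on v-side : distance decreases
        have h1 : T.dist u x = T.dist v x + 1 := by
          obtain ⟨r, hr⟩ := h
          exact dist_side hc huv.symm hb' ⟨r, by rwa [Sym2.eq_swap]⟩
        omega
    omega
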